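/- Let λ > 0, r ≠ λ, let d ∈ ℝ satisfy d² = r²(r−λ)² + 4, let V ∈ ℝ satisfy V² = (r/2)(−r + d/(r−λ)), and set p₀ = V, h = −½r(r−λ) + (2r−λ)d/(2(r−λ)). Then r is a double root of the quartic P(x) = −¼x⁴ − (2p₀²−h)x² + 2λp₀²x + 1 − (p₀²−h)² − p₀²λ², i.e. P(r) = 0 and P′(r) = 0. -/

import Mathlib

/-- at a relative equilibrium of the Kowalevski–Yehia gyrostat,
with p₀ = V and h the energy value, the parameter r is a double root of the
quartic P governing the Kharlamov partial solution. -/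
theorem relative_equilibrium_is_double_root
    (lam r d V : ℝ)
    (hlam : 0 < lam) (hr : r ≠ lam)
    (hd : d^2 = r^2*(r - lam)^2 + 4)
    (hV : V^2 = (r/2)*(-r + d/(r - lam)))
    (p₀ h : ℝ)
    (hp₀ : p₀ = V)
    (hh : h = -(1/2)*r*(r - lam) + (2*r - lam)*d/(2*(r - lam)))
    (P : ℝ → ℝ)
    (hP : P = fun x => -(1/4)*x^4 - (2*p₀^2 - h)*x^2 + 2*lam*p₀^2*x
        + 1 - (p₀^2 - h)^2 - p₀^2*lam^2) :
    P r = 0 ∧ deriv P r = 0 := by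
  have hs : r - lam ≠ 0 := sub_ne_zero.mpr hr
  subst hp₀ hP
  -- key identity 1 : V² − h = −(rλ + d)/2
  have h1 : p₀^2 - h = -(r*lam + d)/2 := by
    rw [hV, hh]; field_simp; ring
  -- key identity 2 : 2 V² (r−λ) = r(−r(r−λ) + d)
  have h2 : 2*p₀^2*(r - lam) = r*(-(r*(r - lam)) + d) := by
    rw [hV]; field_simp
  constructor
  · show -(1/4)*r^4 - (2*p₀^2 - h)*r^2 + 2*lam*p₀^2*r + 1 - (p₀^2 - h)^2 - p₀^2*lam^2 = 0
    linear_combination (-(r^2) - (p₀^2 - h) + (r*lam + d)/2) * h1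
      + (-(r - lam)/2) * h2 + (-(1/4)) * hd
  · have hD : HasDerivAt (fun x : ℝ => -(1/4)*x^4 - (2*p₀^2 - h)*x^2 + 2*lam*p₀^2*x
        + 1 - (p₀^2 - h)^2 - p₀^2*lam^2)
        (-(1/4)*(4*r^3) - (2*p₀^2 - h)*(2*r) + 2*lam*p₀^2) r := by
      have hb := (((((hasDerivAt_pow 4 r).const_mul (-(1/4):ℝ)).sub
          ((hasDerivAt_pow 2 r).const_mul (2*p₀^2 - h))).add
          ((hasDerivAt_id r).const_mul (2*lam*p₀^2))).add_const 1).sub_const ((p₀^2 - h)^2)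
      have hb2 := hb.sub_const (p₀^2*lam^2)
      refine hb2.congr_deriv ?_
      norm_num
    rw [hD.deriv]
    linear_combination (-2*r) * h1 + (-1) * h2
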